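/- (Lemma 2.5(3).) Let Δ be a simplicial complex on V that is pure of dimension r and all of whose facets are relevant, let σ ∈ Δ be a nonempty face, and let τ be a facet of link_σ(Δ). Then there are EXACTLY TWO subsets γ ⊆ τ with |γ| = |τ| − 1 and σ ∪ γ relevant if and only if some color appears at least twice among the vertices of τ. -/
import Mathlib


/-- Lemma 2.5(3): with `Δ` pure of dimension `r`, all facets relevant,
`σ ∈ Δ` nonempty and `τ` a facet of `link_σ(Δ)`, there are EXACTLY TWO codimension-one faces `γ` of
`τ` with `σ ∪ γ` relevant if and only if some color appears at least twice in `τ`. -/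
theorem facet_link_two_interior_iff {V : Type*} [DecidableEq V] {r : ℕ} (hr : 1 ≤ r)
    (col : V → Fin r) (Δ : Set (Finset V))
    (hdown : ∀ σ ∈ Δ, ∀ τ ⊆ σ, τ ∈ Δ)
    (hpure : ∀ τ ∈ Δ, (∀ σ ∈ Δ, τ ⊆ σ → τ = σ) → τ.card = r + 1)
    (hrel : ∀ τ ∈ Δ, (∀ σ ∈ Δ, τ ⊆ σ → τ = σ) → τ.image col = Finset.univ)
    (σ : Finset V) (hσ : σ ∈ Δ) (hσne : σ.Nonempty)
    (τ : Finset V)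
    (hτlink : τ ∈ Δ ∧ τ ∪ σ ∈ Δ ∧ τ ∩ σ = ∅)
    (hτfacet : ∀ γ : Finset V, (γ ∈ Δ ∧ γ ∪ σ ∈ Δ ∧ γ ∩ σ = ∅) → τ ⊆ γ → τ = γ) :
    (τ.powerset.filter fun γ =>
        γ.card = τ.card - 1 ∧ (σ ∪ γ).image col = Finset.univ).card = 2 ↔
      ∃ i : Fin r, 2 ≤ (τ.filter fun v => col v = i).card := by
  classical
  obtain ⟨hτΔ, hτσΔ, hτσdisj⟩ := hτlink
  set s := σ ∪ τ with hs
  have hsΔ : s ∈ Δ := by rw [hs, Finset.union_comm]; exact hτσΔ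
  have hsfacet : ∀ ρ ∈ Δ, s ⊆ ρ → s = ρ := by
    intro ρ hρ hsub
    have hσρ : σ ⊆ ρ := Finset.Subset.trans Finset.subset_union_left hsub
    have h1 : ρ \ σ ∈ Δ := hdown ρ hρ _ (Finset.sdiff_subset)
    have h2 : (ρ \ σ) ∪ σ ∈ Δ := by
      rwa [Finset.sdiff_union_self_eq_union, Finset.union_eq_left.mpr hσρ]
    have h3 : (ρ \ σ) ∩ σ = ∅ := Finset.sdiff_inter_self _ _
    have hτsub : τ ⊆ ρ \ σ := by
      intro v hv
      refine Finset.mem_sdiff.mpr ⟨hsub (Finset.mem_union_right _ hv), ?_⟩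
      intro hvσ
      have : v ∈ τ ∩ σ := Finset.mem_inter.mpr ⟨hv, hvσ⟩
      simp [hτσdisj] at this
    have hτeq := hτfacet (ρ \ σ) ⟨h1, h2, h3⟩ hτsub
    rw [hs, hτeq, Finset.union_sdiff_of_subset hσρ]
  have hcard : s.card = r + 1 := hpure s hsΔ hsfacet
  have hcol : s.image col = Finset.univ := hrel s hsΔ hsfacet
  have hτs : τ ⊆ s := Finset.subset_union_right
  have hdisj : ∀ v ∈ τ, v ∉ σ := by
    intro v hv hvσ
    have : v ∈ τ ∩ σ := Finset.mem_inter.mpr ⟨hv, hvσ⟩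
    simp [hτσdisj] at this
  -- fiber counts
  set n : Fin r → ℕ := fun i => (s.filter fun v => col v = i).card with hn
  have hsum : ∑ i, n i = r + 1 := by
    rw [← hcard]
    exact (Finset.card_eq_sum_card_fiberwise (fun v _ => Finset.mem_univ (col v))).symm
  have hpos : ∀ i, 1 ≤ n i := by
    intro i
    have : i ∈ s.image col := by rw [hcol]; exact Finset.mem_univ i
    obtain ⟨v, hv, hvc⟩ := Finset.mem_image.mp this
    have : v ∈ s.filter fun v => col v = i := Finset.mem_filter.mpr ⟨hv, hvc⟩
    exact Finset.card_pos.mpr ⟨v, this⟩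
  have hsum1 : ∑ i, (n i - 1) = 1 := by
    have h1 : ∑ i, (n i - 1) + ∑ i : Fin r, 1 = ∑ i, n i := by
      rw [← Finset.sum_add_distrib]
      exact Finset.sum_congr rfl fun i _ => by have := hpos i; omega
    have h2 : ∑ i : Fin r, (1 : ℕ) = r := by simp
    omega
  obtain ⟨i0, hi0⟩ : ∃ i0, 2 ≤ n i0 := by
    by_contra h
    push_neg at h
    have : ∑ i, (n i - 1) = 0 := Finset.sum_eq_zero fun i _ => by have := h i; omega
    omega
  have hother : ∀ j, j ≠ i0 → n j = 1 := by
    intro j hj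
    by_contra hne
    have hj2 : 2 ≤ n j := by have := hpos j; omega
    have hle : (n i0 - 1) + (n j - 1) ≤ ∑ i, (n i - 1) := by
      have := Finset.sum_le_sum_of_subset (f := fun i => n i - 1)
        (Finset.subset_univ ({i0, j} : Finset (Fin r)))
      rwa [Finset.sum_pair (Ne.symm hj)] at this
    omega
  have hni0 : n i0 = 2 := by
    have : ∑ i, (n i - 1) = ∑ i, if i = i0 then n i0 - 1 else 0 := by
      refine Finset.sum_congr rfl fun i _ => ?_
      by_cases h : i = i0
      · simp [h]
      · simp [h, hother i h]
    rw [this, Finset.sum_ite_eq' Finset.univ i0 (fun _ => n i0 - 1)] at hsum1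
    simp at hsum1
    omega
  -- key lemma: relevance of s.erase v iff col v = i0
  have keyA : ∀ v ∈ s, ((s.erase v).image col = Finset.univ ↔ col v = i0) := by
    intro v hv
    constructor
    · intro h
      have : col v ∈ (s.erase v).image col := by rw [h]; exact Finset.mem_univ _
      obtain ⟨w, hw, hwc⟩ := Finset.mem_image.mp this
      obtain ⟨hwv, hws⟩ := Finset.mem_erase.mp hw
      have h2 : 2 ≤ n (col v) := by
        apply Finset.one_lt_card.mpr
        exact ⟨w, Finset.mem_filter.mpr ⟨hws, hwc⟩, v,
          Finset.mem_filter.mpr ⟨hv, rfl⟩, hwv⟩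
      by_contra hne
      have := hother _ hne
      omega
    · intro h
      have h2 : 2 ≤ n (col v) := by rw [h]; omega
      obtain ⟨w, hw, u, hu, hwu⟩ := Finset.one_lt_card.mp h2
      apply Finset.eq_univ_of_forall
      intro i
      by_cases hi : i = col v
      · subst hi
        rcases eq_or_ne w v with rfl | hwv
        · exact Finset.mem_image.mpr ⟨u, Finset.mem_erase.mpr
            ⟨Ne.symm hwu, (Finset.mem_filter.mp hu).1⟩, (Finset.mem_filter.mp hu).2⟩
        · exact Finset.mem_image.mpr ⟨w, Finset.mem_erase.mpr
            ⟨hwv, (Finset.mem_filter.mp hw).1⟩, (Finset.mem_filter.mp hw).2⟩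
      · have : i ∈ s.image col := by rw [hcol]; exact Finset.mem_univ i
        obtain ⟨u', hu', hu'c⟩ := Finset.mem_image.mp this
        refine Finset.mem_image.mpr ⟨u', Finset.mem_erase.mpr ⟨?_, hu'⟩, hu'c⟩
        intro he
        exact hi (by rw [← hu'c, he])
  have hkey : ∀ v ∈ τ, σ ∪ τ.erase v = s.erase v := by
    intro v hv
    have hvσ : v ∉ σ := hdisj v hv
    ext w
    simp only [hs, Finset.mem_union, Finset.mem_erase]
    constructor
    · rintro (h | ⟨hne, h⟩)
      · exact ⟨fun e => hvσ (e ▸ h), Or.inl h⟩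
      · exact ⟨hne, Or.inr h⟩
    · rintro ⟨hne, h | h⟩
      · exact Or.inl h
      · exact Or.inr ⟨hne, h⟩
  rcases Finset.eq_empty_or_nonempty τ with rfl | hτne
  · -- τ empty case
    have hσrel : σ.image col = Finset.univ := by
      have : s = σ := by rw [hs, Finset.union_empty]
      rwa [this] at hcol
    simp [Finset.powerset_empty, Finset.filter_singleton, hσrel]
  -- τ nonempty: bijection between codim-one relevant faces and vertices of color i0
  have hbij : (τ.filter fun v => col v = i0).card =
      (τ.powerset.filter fun γ =>
        γ.card = τ.card - 1 ∧ (σ ∪ γ).image col = Finset.univ).card := by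
    apply Finset.card_bij (fun v _ => τ.erase v)
    · intro v hv
      obtain ⟨hvτ, hvc⟩ := Finset.mem_filter.mp hv
      refine Finset.mem_filter.mpr ⟨Finset.mem_powerset.mpr (Finset.erase_subset _ _),
        Finset.card_erase_of_mem hvτ, ?_⟩
      rw [hkey v hvτ]
      exact (keyA v (hτs hvτ)).mpr hvc
    · intro v hv w hw he
      have hvτ := (Finset.mem_filter.mp hv).1
      by_contra hne
      have : v ∈ τ.erase w := Finset.mem_erase.mpr ⟨hne, hvτ⟩
      rw [← he] at this
      exact (Finset.mem_erase.mp this).1 rfl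
    · intro γ hγ
      obtain ⟨hγτ, hγcard, hγrel⟩ := Finset.mem_filter.mp hγ
      rw [Finset.mem_powerset] at hγτ
      have hτpos : 1 ≤ τ.card := Finset.card_pos.mpr hτne
      have hsd : (τ \ γ).card = 1 := by
        rw [Finset.card_sdiff_of_subset hγτ]
        omega
      obtain ⟨v, hv⟩ := Finset.card_eq_one.mp hsd
      have hvτ : v ∈ τ := by
        have : v ∈ τ \ γ := by rw [hv]; exact Finset.mem_singleton_self v
        exact (Finset.mem_sdiff.mp this).1
      have hγeq : γ = τ.erase v := by
        rw [Finset.erase_eq, ← hv, Finset.sdiff_sdiff_eq_self hγτ]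
      refine ⟨v, Finset.mem_filter.mpr ⟨hvτ, ?_⟩, hγeq.symm⟩
      apply (keyA v (hτs hvτ)).mp
      rw [← hkey v hvτ, ← hγeq]
      exact hγrel
  rw [← hbij]
  constructor
  · intro h
    exact ⟨i0, by omega⟩
  · rintro ⟨i, hi⟩
    have hsub : (τ.filter fun v => col v = i) ⊆ (s.filter fun v => col v = i) :=
      Finset.filter_subset_filter _ hτs
    have h2 : 2 ≤ n i := le_trans hi (Finset.card_le_card hsub)
    have hii0 : i = i0 := by
      by_contra hne
      have := hother i hne
      omega
    subst hii0
    have hle : (τ.filter fun v => col v = i).card ≤ n i :=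
      Finset.card_le_card (Finset.filter_subset_filter _ hτs)
    omega
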